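/- Let $p>1$, $w<0$, $a>0$, $b\in\mathbb{R}$, and set $\alpha=a/(p+1)$, $\beta=b/p$. Assume $\alpha^2-\beta w>0$. Then the function $\phi(x)=\left[\frac{-w}{\alpha+\sqrt{\alpha^2-\beta w}\cosh((p-1)\sqrt{-w}\,x)}\right]^{1/(p-1)}$ satisfies the ordinary differential equation $\phi''(x)+w\phi(x)+a\phi(x)^p+b\phi(x)^{2p-1}=0$ for all $x\in\mathbb{R}$. -/

import Mathlib

open Real Filter Set

theorem stmt_1 (p w a b : ℝ) (hp : 1 < p) (hw : w < 0) (ha : 0 < a)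
    (α β : ℝ) (hαdef : α = a / (p + 1)) (hβdef : β = b / p)
    (hD : 0 < α ^ 2 - β * w)
    (φ : ℝ → ℝ)
    (hφ : φ = fun x : ℝ =>
      ((-w) / (α + Real.sqrt (α ^ 2 - β * w) *
        Real.cosh ((p - 1) * Real.sqrt (-w) * x))) ^ (1 / (p - 1))) :
    ∀ x : ℝ,
      deriv (deriv φ) x + w * φ x + a * (φ x) ^ p + b * (φ x) ^ (2 * p - 1) = 0 := by
  intro x
  have hp1 : p - 1 ≠ 0 := sub_ne_zero.2 (ne_of_gt hp)
  have hp0 : p ≠ 0 := by positivity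
  have hpp1 : p + 1 ≠ 0 := by positivity
  have hc : (0:ℝ) < -w := neg_pos.2 hw
  set c : ℝ := -w with hcdef
  set q : ℝ := 1/(p-1) with hqdef
  set k : ℝ := (p-1) * Real.sqrt c with hkdef
  set D : ℝ := Real.sqrt (α^2 - β*w) with hDdef
  have hD0 : 0 < D := Real.sqrt_pos.2 hD
  have hα : 0 < α := by rw [hαdef]; positivity
  set u : ℝ → ℝ := fun y => α + D * Real.cosh (k*y) with hudef
  have hupos : ∀ y, 0 < u y := by
    intro y
    have h1 : (1:ℝ) ≤ Real.cosh (k*y) := Real.one_le_cosh _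
    have h2 := mul_le_mul_of_nonneg_left h1 hD0.le
    simp only [hudef, mul_one] at *
    nlinarith
  have hφ' : φ = fun y => c ^ q * (u y) ^ (-q) := by
    funext y
    rw [hφ]
    simp only [hudef]
    rw [Real.div_rpow hc.le (hupos y).le, Real.rpow_neg (hupos y).le, div_eq_mul_inv]
  have hu' : ∀ y, HasDerivAt u (D * (Real.sinh (k*y) * k)) y := by
    intro y
    have h1 : HasDerivAt (fun y : ℝ => k*y) k y := by
      simpa using (hasDerivAt_id y).const_mul k
    have h2 := (Real.hasDerivAt_cosh (k*y)).comp y h1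
    exact (h2.const_mul D).const_add α
  set φ₁ : ℝ → ℝ := fun y => c^q * (D * (Real.sinh (k*y)*k) * -q * u y ^ (-q-1)) with hφ₁def
  have hd1 : ∀ y, HasDerivAt φ (φ₁ y) y := by
    intro y
    rw [hφ']
    exact ((hu' y).rpow_const (Or.inl (hupos y).ne')).const_mul (c^q)
  have hderiv : deriv φ = φ₁ := funext fun y => (hd1 y).deriv
  -- second derivative
  have hA : HasDerivAt (fun y => u y ^ (-q-1))
      (D * (Real.sinh (k*x)*k) * (-q-1) * u x ^ (-q-1-1)) x :=
    (hu' x).rpow_const (Or.inl (hupos x).ne')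
  have hB : HasDerivAt (fun y => D * (Real.sinh (k*y)*k) * -q)
      (D * (Real.cosh (k*x) * k * k) * -q) x := by
    have h1 : HasDerivAt (fun y : ℝ => k*y) k x := by
      simpa using (hasDerivAt_id x).const_mul k
    have h2 := (Real.hasDerivAt_sinh (k*x)).comp x h1
    exact ((h2.mul_const k).const_mul D).mul_const (-q)
  have hd2 : HasDerivAt φ₁ _ x := ((hB.mul hA).const_mul (c^q))
  rw [hderiv, hd2.deriv, hφ']
  simp only
  -- algebra
  set v : ℝ := u x with hvdef
  set s : ℝ := Real.sinh (k*x) with hsdef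
  set ch : ℝ := Real.cosh (k*x) with hchdef
  have hv : 0 < v := hupos x
  have hDch : D * ch = v - α := by rw [hvdef]; simp only [hudef]; ring
  have hs2 : s*s = ch*ch - 1 := by
    have := Real.cosh_sq_sub_sinh_sq (k*x)
    rw [← hsdef, ← hchdef] at this
    nlinarith [this]
  have hkk : k*k = (p-1)*(p-1)*c := by
    rw [hkdef]
    have := Real.mul_self_sqrt hc.le
    nlinarith [this]
  have hDD : D*D = α^2 + β*c := by
    have := Real.mul_self_sqrt hD.le
    rw [← hDdef] at this
    rw [this, hcdef]; ring
  have hDs : (D*s)*(D*s) = v*v - 2*α*v - β*c := by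
    linear_combination (D*D)*hs2 + (D*ch + v - α)*hDch - hDD
  have hpq : q*(p-1) = 1 := by rw [hqdef]; field_simp
  have hA' : a = α*(p+1) := by rw [hαdef]; field_simp
  have hB' : b = β*p := by rw [hβdef]; field_simp
  have hw' : w = -c := by rw [hcdef]; ring
  -- power rewrites
  have hW1 : v ^ (-q-1) = v ^ (-q-1-1) * v := by
    rw [← Real.rpow_add_one hv.ne']; congr 1; ring
  have hW0 : v ^ (-q) = v ^ (-q-1-1) * v * v := by
    rw [← Real.rpow_add_one hv.ne', ← Real.rpow_add_one hv.ne']; congr 1; ring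
  have hφp : (c^q * v^(-q))^p = c^q * c * (v^(-q-1-1) * v) := by
    rw [Real.mul_rpow (Real.rpow_nonneg hc.le q) (Real.rpow_nonneg hv.le (-q)),
      ← Real.rpow_mul hc.le, ← Real.rpow_mul hv.le,
      show q*p = q+1 by rw [hqdef]; field_simp; try ring,
      show -q*p = (-q-1-1)+1 by rw [hqdef]; field_simp; try ring,
      Real.rpow_add_one hc.ne', Real.rpow_add_one hv.ne']
  have hφ2 : (c^q * v^(-q))^(2*p-1) = c^q * c * c * v^(-q-1-1) := by
    rw [Real.mul_rpow (Real.rpow_nonneg hc.le q) (Real.rpow_nonneg hv.le (-q)),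
      ← Real.rpow_mul hc.le, ← Real.rpow_mul hv.le,
      show q*(2*p-1) = q+1+1 by rw [hqdef]; field_simp; try ring,
      show -q*(2*p-1) = -q-1-1 by rw [hqdef]; field_simp; try ring,
      Real.rpow_add_one hc.ne', Real.rpow_add_one hc.ne']
  rw [hφp, hφ2, hW1, hW0]
  have hP : D*(ch*k*k)*(-q)*v + D*(s*k)*(-q)*(D*(s*k)*(-q-1)) + w*(v*v)
      + a*(c*v) + b*(c*c) = 0 := by
    linear_combination (-q*v*(k*k))*hDch + (q*(q+1)*(k*k))*hDs
      + (-q*v*(v-α) + q*(q+1)*(v*v-2*α*v-β*c))*hkk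
      + (c*((v*v-2*α*v-β*c)*(q*(p-1)+1) + (p-1)*(-α*v-β*c)))*hpq
      + (c*v)*hA' + (c*c)*hB' + (v*v)*hw'
  linear_combination (c^q * v^(-q-1-1)) * hP
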